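/- arXiv:2308.09284 — 4 statements merged into one kernel-verified Lean document; each statement's English description precedes it below -/
import Mathlib

section
/- Let Σ be an alphabet, L ⊆ Σ* a language, and r = r₁r₂⋯r_k ∈ L a word of length k ≥ 2. Let n ≥ 1 and let A, B be n×n Boolean matrices. Define a Σ-labeled digraph H whose vertex set is the disjoint union of layers V₀, …, V_k with V_ℓ = {v₁^(ℓ), …, v_n^(ℓ)}, and whose edges are: (v_i^(0), r₁, v_j^(1)) whenever A[i][j] = 1; (v_j^(i−1), r_i, v_j^(i)) for every j ∈ {1,…,n} and every i ∈ {2,…,k−1}; and (v_i^(k−1), r_k, v_j^(k)) whenever B[i][j] = 1. Then for all i, j ∈ {1,…,n}: the vertex v_j^(k) is L-reachable from v_i^(0) in H if and only if the Boolean matrix product satisfies (A·B)[i][j] = 1, i.e. there exists l ∈ {1,…,n} with A[i][l] = 1 and B[l][j] = 1. -/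
/-- A labeled walk in a `σ`-labeled digraph given by the edge relation `E`:
`LWalk E u w v` means there is a walk from `u` to `v` whose label is the word `w`. -/
inductive LWalk {V σ : Type*} (E : V → σ → V → Prop) : V → List σ → V → Prop
  | nil (v : V) : LWalk E v [] v
  | cons {u v w : V} {c : σ} {l : List σ} :
      E u c v → LWalk E v l w → LWalk E u (c :: l) w

/-- The layered graph encoding Boolean matrix multiplication: a vertex is a pair
(layer, index); layer `0` is `V₀`, ..., layer `k` is `V_k`.  The edges between layer `0`
and layer `1` encode the matrix `A` (labeled `r 0`, i.e. `r₁`), the edges between layer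
`ℓ` and `ℓ+1` for `1 ≤ ℓ ≤ k-2` copy each vertex forward (labeled `r ℓ`), and the edges
between layer `k-1` and layer `k` encode the matrix `B` (labeled `r (k-1)`, i.e. `r_k`). -/
def bmmEdge {σ : Type*} (n k : ℕ) (r : ℕ → σ) (A B : Fin n → Fin n → Bool) :
    ℕ × Fin n → σ → ℕ × Fin n → Prop := fun x c y =>
  (∃ i j : Fin n, A i j = true ∧ x = (0, i) ∧ c = r 0 ∧ y = (1, j)) ∨
  (∃ (ℓ : ℕ) (j : Fin n), 1 ≤ ℓ ∧ ℓ ≤ k - 2 ∧ x = (ℓ, j) ∧ c = r ℓ ∧ y = (ℓ + 1, j)) ∨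
  (∃ i j : Fin n, B i j = true ∧ x = (k - 1, i) ∧ c = r (k - 1) ∧ y = (k, j))


section Aux
variable {σ : Type*} {n k : ℕ} {r : ℕ → σ} {A B : Fin n → Fin n → Bool}

private lemma lwalk_end (hk : 2 ≤ k) {p j : Fin n} {w : List σ}
    (h : LWalk (bmmEdge n k r A B) (k, p) w (k, j)) : p = j := by
  cases h with
  | nil => rfl
  | cons e _ =>
    rcases e with ⟨a, b, _, hx, _, _⟩ | ⟨ℓ, b, h1, h2, hx, _, _⟩ | ⟨a, b, _, hx, _, _⟩
    · exact absurd (congrArg Prod.fst hx) (by simp; omega)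
    · have : k = ℓ := congrArg Prod.fst hx
      omega
    · have : k = k - 1 := congrArg Prod.fst hx
      omega

private lemma lwalk_mid (hk : 2 ≤ k) {m j : Fin n} :
    ∀ (w : List σ) (ℓ : ℕ), 1 ≤ ℓ → ℓ ≤ k - 1 →
      LWalk (bmmEdge n k r A B) (ℓ, m) w (k, j) → B m j = true := by
  intro w
  induction w with
  | nil =>
    intro ℓ h1 h2 h
    cases h; omega
  | cons c t ih =>
    intro ℓ h1 h2 h
    cases h with
    | cons e h' =>
      rcases e with ⟨a, b, _, hx, _, hy⟩ | ⟨ℓ', b, g1, g2, hx, _, hy⟩ |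
        ⟨a, b, hB, hx, _, hy⟩
      · have : ℓ = 0 := congrArg Prod.fst hx
        omega
      · obtain ⟨hx1, hx2⟩ := Prod.mk.injEq .. ▸ hx
        subst hy
        have hb : b = m := by rw [hx2]
        subst hb
        exact ih (ℓ' + 1) (by omega) (by omega) h'
      · obtain ⟨hx1, hx2⟩ := Prod.mk.injEq .. ▸ hx
        subst hy hx2
        have := lwalk_end hk h'
        subst this
        exact hB

private lemma walk_tail (hk : 2 ≤ k) {l j : Fin n} (hB : B l j = true) :
    ∀ (d ℓ : ℕ), 1 ≤ ℓ → ℓ + d = k - 1 →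
      LWalk (bmmEdge n k r A B) (ℓ, l) ((List.range' ℓ (d + 1)).map r) (k, j) := by
  intro d
  induction d with
  | zero =>
    intro ℓ h1 h2
    have hℓ : ℓ = k - 1 := by omega
    subst hℓ
    simp only [List.range'_one, List.map_cons, List.map_nil, Nat.zero_add]
    exact LWalk.cons (Or.inr (Or.inr ⟨l, j, hB, rfl, rfl, rfl⟩)) (LWalk.nil _)
  | succ d ih =>
    intro ℓ h1 h2
    have : (List.range' ℓ (d + 1 + 1)).map r = r ℓ :: (List.range' (ℓ + 1) (d + 1)).map r := by
      rw [List.range'_succ]; rfl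
    rw [this]
    exact LWalk.cons (Or.inr (Or.inl ⟨ℓ, l, h1, by omega, rfl, rfl, rfl⟩))
      (ih (ℓ + 1) (by omega) (by omega))

end Aux

/-- In the layered graph, `v_j^(k)` is `L`-reachable from `v_i^(0)` iff the Boolean
matrix product of `A` and `B` has a `1` in entry `(i, j)`. -/
theorem stmt1 {σ : Type*} (L : Set (List σ)) (k : ℕ) (hk : 2 ≤ k) (r : ℕ → σ)
    (hr : (List.ofFn fun i : Fin k => r i) ∈ L)
    (n : ℕ) (hn : 1 ≤ n) (A B : Fin n → Fin n → Bool) (i j : Fin n) :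
    (∃ w ∈ L, LWalk (bmmEdge n k r A B) (0, i) w (k, j)) ↔
      ∃ l : Fin n, A i l = true ∧ B l j = true := by
  constructor
  · rintro ⟨w, _, hwalk⟩
    cases hwalk with
    | nil => omega
    | cons e h' =>
      rcases e with ⟨a, b, hA, hx, _, hy⟩ | ⟨ℓ', b, g1, g2, hx, _, _⟩ |
        ⟨a, b, _, hx, _, _⟩
      · obtain ⟨_, hx2⟩ := Prod.mk.injEq .. ▸ hx
        subst hy hx2
        exact ⟨b, hA, lwalk_mid hk _ 1 le_rfl (by omega) h'⟩
      · have : (0 : ℕ) = ℓ' := congrArg Prod.fst hx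
        omega
      · have : (0 : ℕ) = k - 1 := congrArg Prod.fst hx
        omega
  · rintro ⟨l, hA, hB⟩
    refine ⟨_, hr, ?_⟩
    have hof : (List.ofFn fun i : Fin k => r i) = (List.range k).map r := by
      apply List.ext_getElem <;> simp
    rw [hof]
    have hr' : List.range k = 0 :: List.range' 1 ((k - 2) + 1) := by
      rw [List.range_eq_range']
      conv_lhs => rw [show k = ((k - 2) + 1) + 1 by omega, List.range'_succ]
    rw [hr', List.map_cons]
    exact LWalk.cons (Or.inl ⟨i, l, hA, rfl, rfl, rfl⟩)
      (walk_tail hk hB (k - 2) 1 le_rfl (by omega))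
end

section
/- Let Σ be an alphabet, L ⊆ Σ* a language, and r = r₁r₂⋯r_k ∈ L a word of length k ≥ 2. Fix n ≥ 1 and j* ∈ {1,…,n}. Define the Σ-labeled digraph H whose vertex set is the disjoint union of layers V₀, …, V_k with V_ℓ = {v₁^(ℓ), …, v_n^(ℓ)}, and whose edges are: (v_i^(0), r₁, v_{j*}^(1)) for all i ∈ {1,…,n}; (v_j^(i−1), r_i, v_j^(i)) for all j ∈ {1,…,n} and all i ∈ {2,…,k−1}; and (v_{j*}^(k−1), r_k, v_i^(k)) for all i ∈ {1,…,n}. Then H has exactly k·n edges, and for every pair i, j ∈ {1,…,n} the vertex v_j^(k) is L-reachable from v_i^(0) in H; in particular the set of L-reachable pairs in V₀ × V_k has size n². -/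
/-- The set of labeled edges of the layered graph `H` with hub vertex `jstar`:
every vertex of layer `0` has an edge (labeled `r 0 = r₁`) to the hub of layer `1`,
layers `ℓ → ℓ+1` for `1 ≤ ℓ ≤ k-2` copy each of the `n` vertices forward
(labeled `r ℓ`), and the hub of layer `k-1` has an edge (labeled `r (k-1) = r_k`)
to every vertex of layer `k`. -/
def hubEdgeSet {σ : Type*} (n k : ℕ) (jstar : Fin n) (r : ℕ → σ) :
    Set ((ℕ × Fin n) × σ × (ℕ × Fin n)) :=
  {e | (∃ i : Fin n, e = ((0, i), r 0, (1, jstar))) ∨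
       (∃ (ℓ : ℕ) (j : Fin n), 1 ≤ ℓ ∧ ℓ ≤ k - 2 ∧ e = ((ℓ, j), r ℓ, (ℓ + 1, j))) ∨
       (∃ i : Fin n, e = ((k - 1, jstar), r (k - 1), (k, i)))}

/-- The corresponding edge relation. -/
def hubEdge {σ : Type*} (n k : ℕ) (jstar : Fin n) (r : ℕ → σ) :
    ℕ × Fin n → σ → ℕ × Fin n → Prop := fun x c y => (x, c, y) ∈ hubEdgeSet n k jstar r

/-- Walk along a path function. -/
lemma lwalk_of_path {V σ : Type*} (E : V → σ → V → Prop) (r : ℕ → σ) (p : ℕ → V) :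
    ∀ t s, (∀ u, s ≤ u → u < s + t → E (p u) (r u) (p (u + 1))) →
      LWalk E (p s) (List.ofFn fun i : Fin t => r (s + i)) (p (s + t)) := by
  intro t
  induction t with
  | zero => intro s _; simpa using LWalk.nil (p s)
  | succ t ih =>
    intro s h
    have e1 : E (p s) (r s) (p (s + 1)) := h s le_rfl (by omega)
    have w := ih (s + 1) (fun u hu hu' => h u (by omega) (by omega))
    have hfn : (List.ofFn fun i : Fin (t + 1) => r (s + i)) =
        r s :: List.ofFn fun i : Fin t => r (s + 1 + i) := by
      rw [List.ofFn_succ]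
      refine congrArg₂ List.cons (by simp) ?_
      refine congrArg List.ofFn (funext fun i => ?_)
      congr 1
      simp only [Fin.val_succ]
      omega
    rw [hfn, show s + (t + 1) = s + 1 + t by omega]
    exact LWalk.cons e1 w

/-- The hub graph has exactly `k·n` edges, every vertex of layer `k` is `L`-reachable from
every vertex of layer `0`, and hence the set of `L`-reachable pairs in `V₀ × V_k` has
size `n²`. -/
theorem stmt2 {σ : Type*} (L : Set (List σ)) (k : ℕ) (hk : 2 ≤ k) (r : ℕ → σ)
    (hr : (List.ofFn fun i : Fin k => r i) ∈ L)
    (n : ℕ) (hn : 1 ≤ n) (jstar : Fin n) :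
    (hubEdgeSet n k jstar r).ncard = k * n ∧
    (∀ i j : Fin n, ∃ w ∈ L, LWalk (hubEdge n k jstar r) (0, i) w (k, j)) ∧
    {p : Fin n × Fin n |
      ∃ w ∈ L, LWalk (hubEdge n k jstar r) (0, p.1) w (k, p.2)}.ncard = n ^ 2 := by
  obtain ⟨m, rfl⟩ : ∃ m, k = m + 2 := ⟨k - 2, by omega⟩
  have hset : hubEdgeSet n (m + 2) jstar r =
      {e | (∃ i : Fin n, e = ((0, i), r 0, (1, jstar))) ∨
           (∃ (ℓ : ℕ) (j : Fin n), 1 ≤ ℓ ∧ ℓ ≤ m ∧ e = ((ℓ, j), r ℓ, (ℓ + 1, j))) ∨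
           (∃ i : Fin n, e = ((m + 1, jstar), r (m + 1), (m + 2, i)))} := by
    simp only [hubEdgeSet, show m + 2 - 2 = m by omega, show m + 2 - 1 = m + 1 by omega]
  have hE : ∀ x c y, ((x, c, y) ∈
      ({e | (∃ i : Fin n, e = ((0, i), r 0, (1, jstar))) ∨
           (∃ (ℓ : ℕ) (j : Fin n), 1 ≤ ℓ ∧ ℓ ≤ m ∧ e = ((ℓ, j), r ℓ, (ℓ + 1, j))) ∨
           (∃ i : Fin n, e = ((m + 1, jstar), r (m + 1), (m + 2, i)))} :
        Set ((ℕ × Fin n) × σ × (ℕ × Fin n)))) →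
      hubEdge n (m + 2) jstar r x c y := by
    intro x c y h
    simp only [hubEdge, hset]
    exact h
  -- The counting map
  set f : Fin (m + 2) × Fin n → (ℕ × Fin n) × σ × (ℕ × Fin n) :=
    fun q =>
      if q.1.val = 0 then ((0, q.2), r 0, (1, jstar))
      else if q.1.val = m + 1 then ((m + 1, jstar), r (m + 1), (m + 2, q.2))
      else ((q.1.val, q.2), r q.1.val, (q.1.val + 1, q.2)) with hf
  have hinj : Function.Injective f := by
    rintro ⟨⟨a, ha⟩, a2⟩ ⟨⟨b, hb⟩, b2⟩ h
    simp only [hf] at h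
    split_ifs at h with h1 h2 h3 h4 h5 h6 h7 h8 h9 h10 h11 h12
    all_goals simp only [Prod.mk.injEq] at h
    all_goals try (exfalso; omega)
    · have e2 : a2 = b2 := h.1.2
      have e1 : a = b := by omega
      subst e1; subst e2; rfl
    · have e2 : a2 = b2 := h.2.2.2
      have e1 : a = b := by omega
      subst e1; subst e2; rfl
    · have e2 : a2 = b2 := h.1.2
      have e1 : a = b := by omega
      subst e1; subst e2; rfl
  have hrange : hubEdgeSet n (m + 2) jstar r = Set.range f := by
    rw [hset]
    ext e
    constructor
    · rintro (⟨i, rfl⟩ | ⟨ℓ, j, hl1, hl2, rfl⟩ | ⟨i, rfl⟩)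
      · exact ⟨(⟨0, by omega⟩, i), by simp [hf]⟩
      · refine ⟨(⟨ℓ, by omega⟩, j), ?_⟩
        simp only [hf]
        rw [if_neg (by omega), if_neg (by omega)]
      · exact ⟨(⟨m + 1, by omega⟩, i), by simp [hf]⟩
    · rintro ⟨⟨q1, q2⟩, rfl⟩
      simp only [hf]
      split_ifs with h1 h2
      · exact Or.inl ⟨q2, by simp [h1]⟩
      · exact Or.inr (Or.inr ⟨q2, by simp [h2]⟩)
      · exact Or.inr (Or.inl ⟨q1.val, q2, by omega, by omega, rfl⟩)
  -- Part 2: walks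
  have walks : ∀ i j : Fin n, ∃ w ∈ L,
      LWalk (hubEdge n (m + 2) jstar r) (0, i) w (m + 2, j) := by
    intro i j
    refine ⟨List.ofFn fun i : Fin (m + 2) => r i, hr, ?_⟩
    set p : ℕ → ℕ × Fin n := fun t =>
      if t = 0 then ((0 : ℕ), i) else if t = m + 2 then (m + 2, j) else (t, jstar) with hp
    have hp0 : p 0 = (0, i) := by simp [hp]
    have hpk : p (m + 2) = (m + 2, j) := by simp [hp]
    have hpmid : ∀ u, 1 ≤ u → u ≤ m + 1 → p u = (u, jstar) := by
      intro u h1 h2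
      simp only [hp]; rw [if_neg (by omega), if_neg (by omega)]
    have hedges : ∀ u, 0 ≤ u → u < 0 + (m + 2) →
        hubEdge n (m + 2) jstar r (p u) (r u) (p (u + 1)) := by
      intro u _ hu
      rcases Nat.lt_or_ge u 1 with h0 | h1
      · have hu0 : u = 0 := by omega
        subst hu0
        rw [hp0, hpmid 1 le_rfl (by omega)]
        exact hE _ _ _ (Or.inl ⟨i, rfl⟩)
      rcases Nat.lt_or_ge u (m + 1) with hmid | hlast
      · rw [hpmid u h1 (by omega), hpmid (u + 1) (by omega) (by omega)]
        exact hE _ _ _ (Or.inr (Or.inl ⟨u, jstar, h1, by omega, rfl⟩))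
      · have hu' : u = m + 1 := by omega
        subst hu'
        rw [hpmid (m + 1) (by omega) le_rfl, hpk]
        exact hE _ _ _ (Or.inr (Or.inr ⟨j, rfl⟩))
    have w := lwalk_of_path (hubEdge n (m + 2) jstar r) r p (m + 2) 0 hedges
    rw [show (0 : ℕ) + (m + 2) = m + 2 by omega, hp0, hpk] at w
    simpa using w
  refine ⟨?_, walks, ?_⟩
  · rw [hrange, ← Nat.card_coe_set_eq, Nat.card_range_of_injective hinj]
    simp [mul_comm]
  · have : {p : Fin n × Fin n | ∃ w ∈ L,
        LWalk (hubEdge n (m + 2) jstar r) (0, p.1) w (m + 2, p.2)} = Set.univ := by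
      ext ⟨i, j⟩; simpa using walks i j
    rw [this, Set.ncard_univ]
    simp [sq]
end

section
/- Let s = s₁s₂⋯s_p be a fixed nonempty word over an alphabet Σ containing the letters a and b. Let G be a 3-partite undirected graph with parts A = {a₁,…,aₙ}, B = {b₁,…,bₙ}, C = {c₁,…,cₙ} and edge set E. Construct a Σ-labeled digraph H with vertex set A ∪ B ∪ C ∪ A' (A' = {a₁',…,aₙ'} fresh) plus, for each edge {b_i, c_j} ∈ E, p−1 fresh intermediate vertices, and with the following labeled edges: (a_i, a_{i+1}) for 1 ≤ i ≤ n−1, each labeled a; (a_i, b_j) labeled a for every edge {a_i, b_j} ∈ E; for every edge {b_i, c_j} ∈ E, a fresh directed path of p edges from b_i to c_j whose consecutive edge labels are s₁, s₂, …, s_p; (c_i, a_j') labeled b for every edge {c_i, a_j} ∈ E; and (a_{i+1}', a_i') for 1 ≤ i ≤ n−1, each labeled b. Then there is a walk from a₁ to a₁' in H whose label belongs to the language {aⁱ s bⁱ : i ∈ ℕ} if and only if G contains a triangle, i.e. there exist i, j, l such that {a_i, b_j}, {b_j, c_l}, {c_l, a_i} are all edges of G. -/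
/-- Vertices of the constructed graph `H`: the copies `A`, `B`, `C` of the parts,
the fresh copies `A' = {a₁',…,aₙ'}`, and for each pair `(i, j)` the fresh intermediate
vertices `vMid i j t` (`t = 1,…,p−1`) of the path spelling `s` from `b_i` to `c_j`. -/
inductive Vtx (n : ℕ) where
  | vA : Fin n → Vtx n
  | vB : Fin n → Vtx n
  | vC : Fin n → Vtx n
  | vA' : Fin n → Vtx n
  | vMid : Fin n → Fin n → ℕ → Vtx n

/-- The `t`-th node (`t = 0,…,p`) of the path of length `p` from `b_i` to `c_j`. -/
def midNode (n p : ℕ) (i j : Fin n) (t : ℕ) : Vtx n :=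
  if t = 0 then Vtx.vB i else if p ≤ t then Vtx.vC j else Vtx.vMid i j t

/-- The labeled edges of `H`, where the tripartite graph `G` is given by the relations
`EAB`, `EBC`, `ECA` describing its edges between the respective parts
(vertices are 0-indexed, so `a₁` is `Vtx.vA ⟨0, _⟩`), `a b : σ` are the two
distinguished letters and the fixed word `s₁⋯s_p` is given by `s : ℕ → σ`
(`s 0 = s₁, …, s (p-1) = s_p`). -/
def triEdge {σ : Type*} {n : ℕ} (p : ℕ) (a b : σ) (s : ℕ → σ)
    (EAB EBC ECA : Fin n → Fin n → Prop) :
    Vtx n → σ → Vtx n → Prop := fun x c y =>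
  (∃ (i : ℕ) (h : i + 1 < n),
      x = Vtx.vA ⟨i, by omega⟩ ∧ c = a ∧ y = Vtx.vA ⟨i + 1, h⟩) ∨
  (∃ i j : Fin n, EAB i j ∧ x = Vtx.vA i ∧ c = a ∧ y = Vtx.vB j) ∨
  (∃ (i j : Fin n) (t : ℕ), EBC i j ∧ t < p ∧
      x = midNode n p i j t ∧ c = s t ∧ y = midNode n p i j (t + 1)) ∨
  (∃ i j : Fin n, ECA i j ∧ x = Vtx.vC i ∧ c = b ∧ y = Vtx.vA' j) ∨
  (∃ (i : ℕ) (h : i + 1 < n),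
      x = Vtx.vA' ⟨i + 1, h⟩ ∧ c = b ∧ y = Vtx.vA' ⟨i, by omega⟩)

theorem LWalk.append {V σ : Type*} {E : V → σ → V → Prop} {u v x : V} {w₁ w₂ : List σ}
    (h1 : LWalk E u w₁ v) (h2 : LWalk E v w₂ x) : LWalk E u (w₁ ++ w₂) x := by
  induction h1 with
  | nil => simpa
  | cons he _ ih => exact LWalk.cons he (ih h2)

theorem key_list {σ : Type*} {a b : σ} (hab : a ≠ b) (d m : ℕ) (hd : 0 < d) :
    ∀ S : List σ,
      List.replicate d a ++ S ++ List.replicate m b ≠ S ++ List.replicate (d + m) b := by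
  intro S
  induction S with
  | nil =>
    intro h
    obtain ⟨d', rfl⟩ := Nat.exists_eq_add_of_lt hd
    simp only [List.nil_append, List.append_nil] at h
    rw [show 0 + d' + 1 = d' + 1 by omega, List.replicate_succ] at h
    rw [show d' + 1 + m = (d' + m) + 1 by omega, List.replicate_succ, List.cons_append] at h
    exact hab (List.cons.injEq .. ▸ h).1
  | cons x S' ih =>
    intro h
    obtain ⟨d', rfl⟩ := Nat.exists_eq_add_of_lt hd
    rw [show 0 + d' + 1 = d' + 1 by omega] at *
    rw [List.replicate_succ, List.cons_append, List.cons_append, List.cons_append] at h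
    obtain ⟨rfl, h⟩ := List.cons.injEq .. ▸ h
    apply ih
    simpa [List.replicate_succ'] using h

theorem ofFn_eq_map_range' {σ : Type*} (s : ℕ → σ) (p : ℕ) :
    (List.ofFn fun t : Fin p => s t) = (List.range' 0 p).map s := by
  rw [List.ofFn_eq_map, ← List.range_eq_range', ← List.map_coe_finRange_eq_range, List.map_map]
  rfl

section main

variable {σ : Type*} {n : ℕ} (hn : 0 < n) {a b : σ} {p : ℕ} {s : ℕ → σ}
  {EAB EBC ECA : Fin n → Fin n → Prop}

local notation "EE" => triEdge p a b s EAB EBC ECA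

/-! ### Construction lemmas -/

theorem walkA' : ∀ (k : ℕ) (h : k < n),
    LWalk EE (Vtx.vA' ⟨k, h⟩) (List.replicate k b) (Vtx.vA' ⟨0, hn⟩) := by
  intro k
  induction k with
  | zero => intro h; exact LWalk.nil _
  | succ k ih =>
    intro h
    rw [List.replicate_succ]
    refine LWalk.cons ?_ (ih (by omega))
    exact Or.inr (Or.inr (Or.inr (Or.inr ⟨k, h, rfl, rfl, rfl⟩)))

theorem walkMid {j l : Fin n} (hjl : EBC j l) :
    ∀ q t, t + q = p →
      LWalk EE (midNode n p j l t) ((List.range' t q).map s) (midNode n p j l p) := by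
  intro q
  induction q with
  | zero => intro t ht; subst ht; simpa using LWalk.nil _
  | succ q ih =>
    intro t ht
    rw [List.range'_succ, List.map_cons]
    refine LWalk.cons ?_ (ih (t + 1) (by omega))
    exact Or.inr (Or.inr (Or.inl ⟨j, l, t, hjl, by omega, rfl, rfl, rfl⟩))

theorem walkA : ∀ (k : ℕ) (h : k < n) {w : List σ} {z : Vtx n},
    LWalk EE (Vtx.vA ⟨k, h⟩) w z → LWalk EE (Vtx.vA ⟨0, hn⟩) (List.replicate k a ++ w) z := by
  intro k
  induction k with
  | zero => intro h w z hw; simpa using hw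
  | succ k ih =>
    intro h w z hw
    have step : LWalk EE (Vtx.vA ⟨k, by omega⟩) (a :: w) z :=
      LWalk.cons (Or.inl ⟨k, h, rfl, rfl, rfl⟩) hw
    have := ih (by omega) step
    simpa [List.replicate_succ', List.append_assoc] using this

/-! ### Inversion lemmas -/

theorem walk_from_A' : ∀ (w : List σ) (k : ℕ) (h : k < n),
    LWalk EE (Vtx.vA' ⟨k, h⟩) w (Vtx.vA' ⟨0, hn⟩) → w = List.replicate k b := by
  intro w
  induction w with
  | nil =>
    intro k h hw
    cases hw
    simp
  | cons c w' ih =>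
    intro k h hw
    cases hw with
    | cons he hw' =>
      rcases he with ⟨i, hi, hx, _, _⟩ | ⟨i, j, _, hx, _, _⟩ | ⟨i, j, t, _, ht, hx, _, _⟩ |
        ⟨i, j, _, hx, _, _⟩ | ⟨i, hi, hx, hc, hy⟩
      · exact absurd hx (by simp)
      · exact absurd hx (by simp)
      · exact absurd hx (by unfold midNode; split_ifs <;> simp)
      · exact absurd hx (by simp)
      · obtain rfl : k = i + 1 := by simpa [Fin.ext_iff] using hx
        subst hy
        rw [List.replicate_succ, hc, ih i (by omega) hw']

theorem walk_from_mid {j l : Fin n} : ∀ (w : List σ) (t : ℕ), 1 ≤ t → t ≤ p →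
    ∀ u, u = midNode n p j l t → LWalk EE u w (Vtx.vA' ⟨0, hn⟩) →
    ∃ (k : ℕ) (h : k < n), ECA l ⟨k, h⟩ ∧
      w = (List.range' t (p - t)).map s ++ b :: List.replicate k b := by
  intro w
  induction w with
  | nil =>
    intro t h1 h2 u hu hw
    cases hw
    exact absurd hu (by unfold midNode; split_ifs <;> simp)
  | cons c w' ih =>
    intro t h1 h2 u hu hw
    subst hu
    cases hw with
    | cons he hw' =>
      rcases he with ⟨i, hi, hx, _, _⟩ | ⟨i', j', _, hx, _, _⟩ |
        ⟨i', j', t', hbc, ht', hx, hc, hy⟩ | ⟨i', j', hca, hx, hc, hy⟩ | ⟨i, hi, hx, hc, hy⟩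
      · exact absurd hx (by unfold midNode; split_ifs <;> simp)
      · exact absurd hx (by unfold midNode; split_ifs <;> simp)
      · -- internal step: t < p, i' = j, j' = l, t' = t
        have hx' : j = i' ∧ l = j' ∧ t = t' ∧ t < p := by
          unfold midNode at hx
          split_ifs at hx <;> simp_all <;> omega
        obtain ⟨rfl, rfl, rfl, htp⟩ := hx'
        obtain ⟨k, hk, hca, hw''⟩ := ih (t + 1) (by omega) (by omega) _ hy hw'
        refine ⟨k, hk, hca, ?_⟩
        rw [hc, hw'', show p - t = (p - (t + 1)) + 1 by omega, List.range'_succ,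
          List.map_cons, List.cons_append]
      · -- final step into C: t = p
        have hx' : t = p ∧ l = i' := by
          unfold midNode at hx
          split_ifs at hx <;> simp_all <;> omega
        obtain ⟨rfl, rfl⟩ := hx'
        subst hy
        refine ⟨j'.1, j'.2, by simpa using hca, ?_⟩
        rw [hc, walk_from_A' hn w' j'.1 j'.2 (by simpa using hw')]
        simp
      · exact absurd hx (by unfold midNode; split_ifs <;> simp)

theorem walk_from_B (hp : 1 ≤ p) {j : Fin n} (w : List σ)
    (hw : LWalk EE (Vtx.vB j) w (Vtx.vA' ⟨0, hn⟩)) :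
    ∃ (l : Fin n) (k : ℕ) (h : k < n), EBC j l ∧ ECA l ⟨k, h⟩ ∧
      w = (List.range' 0 p).map s ++ b :: List.replicate k b := by
  cases hw with
  | cons he hw' =>
    rcases he with ⟨i, hi, hx, _, _⟩ | ⟨i', j', _, hx, _, _⟩ |
      ⟨i', j', t', hbc, ht', hx, hc, hy⟩ | ⟨i', j', _, hx, _, _⟩ | ⟨i, hi, hx, _, _⟩
    · exact absurd hx (by simp)
    · exact absurd hx (by simp)
    · have hx' : t' = 0 ∧ j = i' := by
        unfold midNode at hx
        split_ifs at hx <;> simp_all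
      obtain ⟨rfl, rfl⟩ := hx'
      obtain ⟨k, hk, hca, hw''⟩ := walk_from_mid hn _ 1 le_rfl hp _ hy hw'
      refine ⟨j', k, hk, hbc, hca, ?_⟩
      rw [hc, hw'', show p = (p - 1) + 1 by omega, List.range'_succ, List.map_cons,
        List.cons_append, show 0 + 1 = 1 by omega, Nat.add_sub_cancel]
    · exact absurd hx (by simp)
    · exact absurd hx (by simp)

theorem walk_from_A (hp : 1 ≤ p) : ∀ (w : List σ) (k : ℕ) (h : k < n),
    LWalk EE (Vtx.vA ⟨k, h⟩) w (Vtx.vA' ⟨0, hn⟩) →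
    ∃ (k₁ : ℕ) (h₁ : k₁ < n) (j l : Fin n) (k₂ : ℕ) (h₂ : k₂ < n),
      EAB ⟨k₁, h₁⟩ j ∧ EBC j l ∧ ECA l ⟨k₂, h₂⟩ ∧ k ≤ k₁ ∧
      w = List.replicate (k₁ - k) a ++ [a] ++ (List.range' 0 p).map s ++
        b :: List.replicate k₂ b := by
  intro w
  induction w with
  | nil => intro k h hw; cases hw
  | cons c w' ih =>
    intro k h hw
    cases hw with
    | cons he hw' =>
      rcases he with ⟨i, hi, hx, hc, hy⟩ | ⟨i', j', habe, hx, hc, hy⟩ |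
        ⟨i', j', t', _, ht', hx, _, _⟩ | ⟨i', j', _, hx, _, _⟩ | ⟨i, hi, hx, _, _⟩
      · -- move along A
        obtain rfl : k = i := by simpa [Fin.ext_iff] using hx
        subst hy
        obtain ⟨k₁, h₁, j, l, k₂, h₂, h1, h2, h3, hle, hw''⟩ := ih (k + 1) hi hw'
        refine ⟨k₁, h₁, j, l, k₂, h₂, h1, h2, h3, by omega, ?_⟩
        rw [hc, hw'', show k₁ - k = (k₁ - (k + 1)) + 1 by omega, List.replicate_succ]
        simp
      · -- step into B
        obtain rfl : i' = ⟨k, h⟩ := by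
          cases i'; simpa [Fin.ext_iff, eq_comm] using hx
        subst hy
        obtain ⟨l, k₂, h₂, h2, h3, hw''⟩ := walk_from_B hn hp w' hw'
        refine ⟨k, h, j', l, k₂, h₂, habe, h2, h3, le_rfl, ?_⟩
        rw [hc, hw'']
        simp
      · exact absurd hx (by unfold midNode; split_ifs <;> simp)
      · exact absurd hx (by simp)
      · exact absurd hx (by simp)

end main

/-- There is a walk from `a₁` to `a₁'` in `H` whose label belongs to the language
`{aⁱ s bⁱ : i ∈ ℕ}` iff `G` has a triangle. -/
theorem stmt9 {σ : Type*} {n : ℕ} (hn : 0 < n) (a b : σ) (hab : a ≠ b)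
    (p : ℕ) (hp : 1 ≤ p) (s : ℕ → σ)
    (EAB EBC ECA : Fin n → Fin n → Prop) :
    (∃ w : List σ,
        (∃ i : ℕ, w = List.replicate i a ++ (List.ofFn fun t : Fin p => s t) ++
          List.replicate i b) ∧
        LWalk (triEdge p a b s EAB EBC ECA) (Vtx.vA ⟨0, hn⟩) w (Vtx.vA' ⟨0, hn⟩)) ↔
      ∃ i j l : Fin n, EAB i j ∧ EBC j l ∧ ECA l i := by
  constructor
  · rintro ⟨w, ⟨m, hwform⟩, hwalk⟩
    obtain ⟨k₁, h₁, j, l, k₂, h₂, h1, h2, h3, -, hw2⟩ := walk_from_A hn hp w 0 hn hwalk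
    rw [Nat.sub_zero] at hw2
    -- normalize both decompositions
    have hw2' : w = List.replicate (k₁ + 1) a ++ (List.range' 0 p).map s ++
        List.replicate (k₂ + 1) b := by
      rw [hw2, List.replicate_succ', List.replicate_succ]
    have hwform' : w = List.replicate m a ++ (List.range' 0 p).map s ++
        List.replicate m b := by
      rw [hwform, ofFn_eq_map_range']
    set S := (List.range' 0 p).map s with hS
    have eq : List.replicate m a ++ S ++ List.replicate m b =
        List.replicate (k₁ + 1) a ++ S ++ List.replicate (k₂ + 1) b := by
      rw [← hwform', ← hw2']
    have h2m : 2 * m = k₁ + k₂ + 2 := by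
      have := congrArg List.length eq
      simp at this
      omega
    have hm : m = k₁ + 1 := by
      rcases lt_trichotomy m (k₁ + 1) with hlt | heq | hgt
      · exfalso
        set d := k₁ + 1 - m with hd
        have hm' : k₁ + 1 = m + d := by omega
        rw [hm', List.replicate_add] at eq
        simp only [List.append_assoc] at eq
        have eq' := List.append_cancel_left eq
        simp only [← List.append_assoc] at eq'
        have hmd : m = d + (k₂ + 1) := by omega
        exact key_list hab d (k₂ + 1) (by omega) S (by rw [← eq', hmd])
      · exact heq
      · exfalso
        set d := m - (k₁ + 1) with hd
        have hm' : m = (k₁ + 1) + d := by omega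
        rw [hm', List.replicate_add] at eq
        simp only [List.append_assoc] at eq
        have eq' := List.append_cancel_left eq
        simp only [← List.append_assoc] at eq'
        refine key_list hab d m (by omega) S ?_
        rw [show d + m = k₂ + 1 by omega, show m = k₁ + 1 + d by omega]
        exact eq'
    have hk : k₁ = k₂ := by
      rw [hm] at eq
      have eq' := List.append_cancel_left (List.append_cancel_left
        (by simpa only [List.append_assoc] using eq))
      have := congrArg List.length eq'
      simp at this
      omega
    subst hk
    exact ⟨⟨k₁, h₁⟩, j, l, h1, h2, by convert h3⟩
  · rintro ⟨i, j, l, h1, h2, h3⟩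
    have hB : midNode n p j l 0 = Vtx.vB j := by simp [midNode]
    have hC : midNode n p j l p = Vtx.vC l := by
      unfold midNode; rw [if_neg (by omega), if_pos le_rfl]
    have W1 : LWalk (triEdge p a b s EAB EBC ECA) (Vtx.vA' i)
        (List.replicate i.1 b) (Vtx.vA' ⟨0, hn⟩) := by
      have := walkA' (a := a) (b := b) (p := p) (s := s) (EAB := EAB) (EBC := EBC)
        (ECA := ECA) hn i.1 i.2
      simpa using this
    have W2 : LWalk (triEdge p a b s EAB EBC ECA) (Vtx.vC l)
        (b :: List.replicate i.1 b) (Vtx.vA' ⟨0, hn⟩) :=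
      LWalk.cons (Or.inr (Or.inr (Or.inr (Or.inl ⟨l, i, h3, rfl, rfl, rfl⟩)))) W1
    have W3 : LWalk (triEdge p a b s EAB EBC ECA) (Vtx.vB j)
        ((List.range' 0 p).map s ++ b :: List.replicate i.1 b) (Vtx.vA' ⟨0, hn⟩) := by
      have := (walkMid h2 p 0 (by omega)).append (hC ▸ W2)
      rwa [hB] at this
    have W4 : LWalk (triEdge p a b s EAB EBC ECA) (Vtx.vA i)
        (a :: ((List.range' 0 p).map s ++ b :: List.replicate i.1 b)) (Vtx.vA' ⟨0, hn⟩) :=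
      LWalk.cons (Or.inr (Or.inl ⟨i, j, h1, rfl, rfl, rfl⟩)) W3
    have W5 : LWalk (triEdge p a b s EAB EBC ECA) (Vtx.vA ⟨0, hn⟩)
        (List.replicate i.1 a ++ (a :: ((List.range' 0 p).map s ++
          b :: List.replicate i.1 b))) (Vtx.vA' ⟨0, hn⟩) :=
      walkA hn i.1 i.2 (by simpa using W4)
    refine ⟨_, ⟨i.1 + 1, ?_⟩, W5⟩
    rw [ofFn_eq_map_range', List.replicate_succ', List.replicate_succ]
    simp
end

section
/- Let Σ be an alphabet, α ∈ Σ, and L ⊆ Σ* a language; define the right quotient L/α = {w ∈ Σ* : wα ∈ L}. Let G be a Σ-labeled digraph with vertex set V, and let G' be obtained from G by adding, for every vertex v ∈ V, a fresh vertex t_v and the labeled edge (v, α, t_v). Then for all vertices u, v ∈ V: the vertex t_v is L-reachable from u in G' if and only if v is (L/α)-reachable from u in G. -/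
/-- The edges of the graph `G'` obtained from `G` (vertex set `V`, edge relation `E`)
by adding, for every vertex `v`, a fresh vertex `t_v = Sum.inr v` together with the
edge `(v, α, t_v)`.  Original vertices are embedded as `Sum.inl`. -/
def quotEdge {S V : Type*} (E : V → S → V → Prop) (α : S) :
    V ⊕ V → S → V ⊕ V → Prop := fun x c y =>
  (∃ u w : V, E u c w ∧ x = Sum.inl u ∧ y = Sum.inl w) ∨
  (∃ v : V, x = Sum.inl v ∧ c = α ∧ y = Sum.inr v)

lemma lwalk_inr {S V : Type*} {E : V → S → V → Prop} {α : S} {a : V} {l : List S}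
    {y : V ⊕ V} (h : LWalk (quotEdge E α) (Sum.inr a) l y) : l = [] ∧ y = Sum.inr a := by
  cases h with
  | nil => exact ⟨rfl, rfl⟩
  | cons e _ =>
    rcases e with ⟨_, _, _, h1, _⟩ | ⟨_, h1, _, _⟩ <;> simp at h1

lemma lwalk_fwd {S V : Type*} {E : V → S → V → Prop} {α : S} {x y : V ⊕ V} {l : List S}
    (h : LWalk (quotEdge E α) x l y) : ∀ u v : V, x = Sum.inl u → y = Sum.inr v →
      ∃ w, l = w ++ [α] ∧ LWalk E u w v := by
  induction h with
  | nil => intro u v h1 h2; rw [h1] at h2; simp at h2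
  | @cons _ m _ c _ e tail ih =>
    intro u v h1 h2
    subst h1
    rcases e with ⟨a, b, he, ha, hb⟩ | ⟨a, ha, hc, hb⟩
    · injection ha with ha; subst ha
      obtain ⟨w, hw, hwk⟩ := ih b v hb h2
      exact ⟨c :: w, by rw [hw]; rfl, .cons he hwk⟩
    · subst hc
      injection ha with ha; subst ha
      obtain ⟨hl, hy⟩ := lwalk_inr (hb ▸ tail)
      subst hl
      rw [h2] at hy
      injection hy with hy; subst hy
      exact ⟨[], rfl, .nil _⟩

lemma lwalk_bwd {S V : Type*} {E : V → S → V → Prop} (α : S) {u v : V} {w : List S}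
    (h : LWalk E u w v) : LWalk (quotEdge E α) (Sum.inl u) (w ++ [α]) (Sum.inr v) := by
  induction h with
  | nil v => exact .cons (Or.inr ⟨v, rfl, rfl, rfl⟩) (.nil _)
  | cons e _ ih => exact .cons (Or.inl ⟨_, _, e, rfl, rfl⟩) ih

/-- For all original vertices `u, v`: the fresh vertex `t_v` is `L`-reachable from `u`
in `G'` iff `v` is `L/α`-reachable from `u` in `G`, where `L/α = {w : wα ∈ L}`. -/
theorem stmt11 {S V : Type*} (E : V → S → V → Prop) (α : S) (L : Set (List S))
    (u v : V) :
    (∃ w ∈ L, LWalk (quotEdge E α) (Sum.inl u) w (Sum.inr v)) ↔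
      ∃ w ∈ {w : List S | w ++ [α] ∈ L}, LWalk E u w v := by
  constructor
  · rintro ⟨w, hL, hwk⟩
    obtain ⟨w', hw', hwk'⟩ := lwalk_fwd hwk u v rfl rfl
    exact ⟨w', by rw [Set.mem_setOf_eq, ← hw']; exact hL, hwk'⟩
  · rintro ⟨w, hL, hwk⟩
    exact ⟨w ++ [α], hL, lwalk_bwd α hwk⟩
end
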